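/- Let (M, μ) be a probability measure space, let 1 < p < q be reals, h < 0, and ε > 0. Let f, a : M → ℝ be integrable with a ≥ 0 a.e., set F = ∫ |f⁻| dμ and A = ∫ a dμ, and assume F > 0. If A ≤ ((p+q)/(2p) · |h|/F)^((q+p)/(q−p)) · |h|(q−p)/(2p), then, setting k₀ = ((p+q)/(2p) · |h|/F)^(q/(q−p)), one has (h/p)·k₀^(p/q) − (k₀/q)·∫ f dμ + (1/q)·∫ a/(k₀^(2/q) + ε)^(q/2) dμ ≤ 0. -/

import Mathlib

open MeasureTheory Real

theorem stmt2 {M : Type*} [MeasurableSpace M] (μ : Measure M) [IsProbabilityMeasure μ]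
    (p q h ε F A k₀ : ℝ) (hp : 1 < p) (hpq : p < q) (hh : h < 0) (hε : 0 < ε)
    (f a : M → ℝ) (hf : Integrable f μ) (ha : Integrable a μ)
    (hanonneg : ∀ᵐ x ∂μ, 0 ≤ a x)
    (hF : F = ∫ x, max (-f x) 0 ∂μ) (hA : A = ∫ x, a x ∂μ) (hFpos : 0 < F)
    (hsmall : A ≤ ((p + q) / (2 * p) * (|h| / F)) ^ ((q + p) / (q - p))
        * (|h| * (q - p) / (2 * p)))
    (hk₀ : k₀ = ((p + q) / (2 * p) * (|h| / F)) ^ (q / (q - p))) :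
    h / p * k₀ ^ (p / q) - k₀ / q * ∫ x, f x ∂μ
      + (1 / q) * ∫ x, a x / (k₀ ^ (2 / q) + ε) ^ (q / 2) ∂μ ≤ 0 := by
  have hq : 1 < q := hp.trans hpq
  have hp0 : 0 < p := by linarith
  have hq0 : 0 < q := by linarith
  have hqp : 0 < q - p := by linarith
  have habs : |h| = -h := abs_of_neg hh
  set B : ℝ := (p + q) / (2 * p) * (|h| / F) with hB
  have hBpos : 0 < B := by
    apply mul_pos (by positivity)
    exact div_pos (abs_pos.mpr hh.ne) hFpos
  have hk₀pos : 0 < k₀ := by rw [hk₀]; exact Real.rpow_pos_of_pos hBpos _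
  set C : ℝ := B ^ (p / (q - p)) with hC
  have hCpos : 0 < C := Real.rpow_pos_of_pos hBpos _
  -- k₀ ^ (p/q) = C
  have hCk : k₀ ^ (p / q) = C := by
    rw [hk₀, ← Real.rpow_mul hBpos.le, hC]
    congr 1
    field_simp
  -- k₀ = C * B
  have hk₀C : k₀ = C * B := by
    rw [hk₀, hC, show q / (q - p) = p / (q - p) + 1 by field_simp; ring,
      Real.rpow_add hBpos, Real.rpow_one]
  -- B ^ ((q+p)/(q-p)) = k₀ * C
  have hk₀C' : B ^ ((q + p) / (q - p)) = k₀ * C := by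
    rw [hk₀, hC, ← Real.rpow_add hBpos]
    congr 1
    field_simp
  -- bound on ∫ f
  have hg : Integrable (fun x => max (-f x) 0) μ := hf.neg.pos_part
  have hIf : -F ≤ ∫ x, f x ∂μ := by
    rw [hF, ← integral_neg]
    apply integral_mono hg.neg hf
    intro x
    have := le_max_left (-f x) 0
    simp only [Pi.neg_apply]
    linarith
  -- bound on the third integral
  have hden : k₀ ≤ (k₀ ^ (2 / q) + ε) ^ (q / 2) := by
    have h1 : k₀ = (k₀ ^ (2 / q)) ^ (q / 2) := by
      rw [← Real.rpow_mul hk₀pos.le, show 2 / q * (q / 2) = 1 by field_simp,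
        Real.rpow_one]
    calc k₀ = (k₀ ^ (2 / q)) ^ (q / 2) := h1
      _ ≤ (k₀ ^ (2 / q) + ε) ^ (q / 2) :=
        Real.rpow_le_rpow (Real.rpow_nonneg hk₀pos.le _) (by linarith) (by positivity)
  have hI3 : ∫ x, a x / (k₀ ^ (2 / q) + ε) ^ (q / 2) ∂μ ≤ A / k₀ := by
    rw [hA, ← integral_div]
    apply integral_mono_ae (ha.div_const _) (ha.div_const _)
    filter_upwards [hanonneg] with x hx
    gcongr
  -- bound on A / k₀
  have hAk : A / k₀ ≤ C * (|h| * (q - p) / (2 * p)) := by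
    rw [div_le_iff₀ hk₀pos]
    rw [hk₀C'] at hsmall
    nlinarith
  -- key algebraic identity
  have hzero : h / p * C + k₀ * F / q + 1 / q * (C * (|h| * (q - p) / (2 * p))) = 0 := by
    rw [habs, hk₀C, hB, habs]
    field_simp
    ring
  -- combine
  have key2 : -(k₀ / q * ∫ x, f x ∂μ) ≤ k₀ * F / q := by
    have h1 : -∫ x, f x ∂μ ≤ F := by linarith
    calc -(k₀ / q * ∫ x, f x ∂μ) = k₀ / q * (-∫ x, f x ∂μ) := by ring
      _ ≤ k₀ / q * F := mul_le_mul_of_nonneg_left h1 (by positivity)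
      _ = k₀ * F / q := by ring
  have key3 : (1 / q) * ∫ x, a x / (k₀ ^ (2 / q) + ε) ^ (q / 2) ∂μ
      ≤ 1 / q * (C * (|h| * (q - p) / (2 * p))) :=
    mul_le_mul_of_nonneg_left (hI3.trans hAk) (by positivity)
  rw [hCk]
  linarith
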